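/- arXiv:2012.09582 — 3 statements merged into one kernel-verified Lean document; each statement's English description precedes it below -/
import Mathlib

section
/- If a finite group H has a cyclic Sylow 2-subgroup of order at least 2, then H has a normal subgroup of index 2; in particular, a finite group of even order with cyclic Sylow 2-subgroups is not simple unless it has order 2. -/
/-- A subgroup of index 2 is normal. -/
lemma aux_normal_of_index_two {G : Type*} [Group G] (L : Subgroup G)
    (h : L.index = 2) : L.Normal := by
  constructor
  intro x hx g
  rw [Subgroup.mul_mem_iff_of_index_two h, Subgroup.mul_mem_iff_of_index_two h]
  simp [hx, L.inv_mem_iff]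

/-- If a finite group `H` has a cyclic Sylow 2-subgroup of order at least 2,
then `H` has a normal subgroup of index 2; in particular such a group is not simple
unless it has order 2. -/
theorem stmt5 {H : Type*} [Group H] [Finite H] (S : Sylow 2 H)
    (hcyc : IsCyclic S) (hS : 2 ≤ Nat.card S) :
    (∃ N : Subgroup H, N.Normal ∧ N.index = 2) ∧
      (IsSimpleGroup H → Nat.card H = 2) := by
  haveI : Fact (Nat.Prime 2) := ⟨Nat.prime_two⟩
  set P : Subgroup H := (S : Subgroup H) with hPdef
  -- card of S is 2 ^ k with k ≥ 1
  set k := (Nat.card H).factorization 2 with hk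
  have hcard : Nat.card P = 2 ^ k := S.card_eq_multiplicity
  have hk1 : 1 ≤ k := by
    rcases Nat.eq_zero_or_pos k with h | h
    · rw [h, pow_zero] at hcard; omega
    · exact h
  -- commutativity of P
  have hcomm : ∀ a b : H, a ∈ P → b ∈ P → a * b = b * a := by
    obtain ⟨g, hg⟩ := hcyc
    intro a b ha hb
    obtain ⟨m, hm⟩ := hg ⟨a, ha⟩
    obtain ⟨n, hn⟩ := hg ⟨b, hb⟩
    have hm' : ((g : H)) ^ m = a := by
      have := Subtype.ext_iff.mp hm; push_cast at this; exact this
    have hn' : ((g : H)) ^ n = b := by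
      have := Subtype.ext_iff.mp hn; push_cast at this; exact this
    rw [← hm', ← hn', zpow_mul_comm]
  -- normalizer ≤ centralizer
  have hP : Subgroup.normalizer (P : Set H) ≤ Subgroup.centralizer (P : Set H) := by
    set N := Subgroup.normalizer (P : Set H) with hN
    let φ : N →* MulAut (P.subgroupOf N) := MulAut.conjNormal
    have hPker : P.subgroupOf N ≤ φ.ker := by
      intro x hx
      rw [Subgroup.mem_subgroupOf] at hx
      rw [MonoidHom.mem_ker]
      ext q
      have hq := q.2
      rw [Subgroup.mem_subgroupOf] at hq
      show (((MulAut.conjNormal (x : N)) q : N) : H) = ((q : N) : H)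
      rw [MulAut.conjNormal_apply]
      push_cast
      rw [hcomm _ _ hx hq]
      group
    -- index of ker divides odd number
    have hodd : ¬ 2 ∣ P.index := S.not_dvd_index
    have h1 : φ.ker.index ∣ P.index := by
      have d1 : φ.ker.index ∣ (P.subgroupOf N).index :=
        Subgroup.index_dvd_of_le hPker
      have d2 : (P.subgroupOf N).index = P.relIndex N := rfl
      exact d1.trans (d2 ▸ Subgroup.relIndex_dvd_index_of_le Subgroup.le_normalizer)
    -- index of ker divides power of 2
    have hcard' : Nat.card (P.subgroupOf N) = 2 ^ k := by
      rw [← hcard]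
      exact Nat.card_congr (Subgroup.subgroupOfEquivOfLe Subgroup.le_normalizer).toEquiv
    have hcyc' : IsCyclic (P.subgroupOf N) :=
      isCyclic_of_surjective (Subgroup.subgroupOfEquivOfLe
        (Subgroup.le_normalizer (H := P))).symm (MulEquiv.surjective _)
    have h2 : φ.ker.index ∣ 2 ^ (k - 1) := by
      rw [Subgroup.index_ker]
      have := Subgroup.card_subgroup_dvd_card φ.range
      have hMA : Nat.card (MulAut (P.subgroupOf N)) = 2 ^ (k - 1) := by
        rw [hcyc'.card_mulAut, hcard', Nat.totient_prime_pow Nat.prime_two hk1]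
        simp
      rwa [hMA] at this
    -- hence index of ker = 1
    have hker : φ.ker = ⊤ := by
      rw [← Subgroup.index_eq_one]
      have hcop : Nat.Coprime (2 ^ (k - 1)) P.index :=
        Nat.Coprime.pow_left _ ((Nat.prime_two.coprime_iff_not_dvd).mpr hodd)
      exact Nat.eq_one_of_dvd_coprimes hcop h2 h1
    intro x hx
    rw [Subgroup.mem_centralizer_iff]
    intro p hp
    have hx' : (⟨x, hx⟩ : N) ∈ φ.ker := hker ▸ Subgroup.mem_top _
    rw [MonoidHom.mem_ker] at hx'
    have hpN : p ∈ N := Subgroup.le_normalizer hp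
    have hpP : (⟨p, hpN⟩ : N) ∈ P.subgroupOf N := by
      rwa [Subgroup.mem_subgroupOf]
    have := congrArg (fun f : MulAut (P.subgroupOf N) => ((f ⟨⟨p, hpN⟩, hpP⟩ : N) : H)) hx'
    simp only [φ, MulAut.conjNormal_apply] at this
    push_cast at this
    rw [MulAut.one_apply] at this
    -- this : x * p * x⁻¹ = p
    have : x * p * x⁻¹ = p := this
    calc p * x = (x * p * x⁻¹) * x := by rw [this]
    _ = x * p := by group
  -- Burnside's normal p-complement theorem
  haveI : P.FiniteIndex := Subgroup.finiteIndex_of_finite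
  let K := (MonoidHom.transferSylow S hP).ker
  have hKnormal : K.Normal := MonoidHom.normal_ker _
  have hKindex : K.index = 2 ^ k := by
    rw [(MonoidHom.ker_transferSylow_isComplement' S hP).symm.index_eq_card, hcard]
  -- quotient has order 2 ^ k; find a subgroup of index 2 there
  have hQcard : Nat.card (H ⧸ K) = 2 ^ k := by
    rw [← Subgroup.index_eq_card, hKindex]
  obtain ⟨L, hL⟩ := Sylow.exists_subgroup_card_pow_prime (G := H ⧸ K) 2
    (n := k - 1) (by rw [hQcard]; exact pow_dvd_pow 2 (by omega))
  have hLindex : L.index = 2 := by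
    have := Subgroup.card_mul_index L
    rw [hL, hQcard] at this
    have h2k : 2 ^ k = 2 ^ (k - 1) * 2 := by
      rw [← pow_succ]; congr 1; omega
    rw [h2k] at this
    exact Nat.eq_of_mul_eq_mul_left (Nat.pos_of_ne_zero (pow_ne_zero _ two_ne_zero)) this
  -- pull back
  refine ⟨⟨(L.comap (QuotientGroup.mk' K)), ?_, ?_⟩, ?_⟩
  · exact aux_normal_of_index_two _ (by
      rw [Subgroup.index_comap_of_surjective _ (QuotientGroup.mk'_surjective K), hLindex])
  · rw [Subgroup.index_comap_of_surjective _ (QuotientGroup.mk'_surjective K), hLindex]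
  · intro hsimple
    have hNindex : (L.comap (QuotientGroup.mk' K)).index = 2 := by
      rw [Subgroup.index_comap_of_surjective _ (QuotientGroup.mk'_surjective K), hLindex]
    have hNnormal : (L.comap (QuotientGroup.mk' K)).Normal :=
      aux_normal_of_index_two _ hNindex
    rcases hsimple.eq_bot_or_eq_top_of_normal _ hNnormal with h | h
    · rw [h, Subgroup.index_bot] at hNindex
      exact hNindex.symm ▸ rfl
    · rw [h, Subgroup.index_top] at hNindex
      omega
end

section
/- Let F be a field of characteristic ≠ 2, let U ≤ PSL₂(F) be the image of the upper unitriangular matrices and let u ∈ U be nontrivial. Then the centralizer of u in PSL₂(F) equals U. -/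
open Matrix

variable (F : Type*) [Field F]

/-- `SL₂(F)`. -/
abbrev SL2 := Matrix.SpecialLinearGroup (Fin 2) F

/-- `PSL₂(F) = SL₂(F)/{±I}` (the center of `SL₂(F)`). -/
abbrev PSL2 := SL2 F ⧸ Subgroup.center (SL2 F)

variable {F} in
/-- The unitriangular matrix `[[1,x],[0,1]]` as an element of `SL₂(F)`. -/
def sl2uni (x : F) : SL2 F :=
  ⟨!![1, x; 0, 1], by simp [Matrix.det_fin_two_of]⟩

variable {F} in
/-- The diagonal matrix `diag(t, t⁻¹)` as an element of `SL₂(F)`. -/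
def sl2diag (t : Fˣ) : SL2 F :=
  ⟨!![(t : F), 0; 0, ((t⁻¹ : Fˣ) : F)], by simp [Matrix.det_fin_two_of]⟩

/-- The homomorphism `(F,+) → SL₂(F)`, `x ↦ [[1,x],[0,1]]`. -/
def uniHom : Multiplicative F →* SL2 F where
  toFun x := sl2uni (Multiplicative.toAdd x)
  map_one' := by
    ext i j
    fin_cases i <;> fin_cases j <;> simp [sl2uni]
  map_mul' x y := by
    apply Subtype.ext
    change (!![1, Multiplicative.toAdd (x * y); 0, 1] : Matrix (Fin 2) (Fin 2) F) =
      !![1, Multiplicative.toAdd x; 0, 1] * !![1, Multiplicative.toAdd y; 0, 1]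
    rw [Matrix.mul_fin_two, toAdd_mul]
    ext i j
    fin_cases i <;> fin_cases j <;> simp <;> ring

/-- The homomorphism `F^× → SL₂(F)`, `t ↦ diag(t, t⁻¹)`. -/
def diagHom : Fˣ →* SL2 F where
  toFun t := sl2diag t
  map_one' := by
    ext i j
    fin_cases i <;> fin_cases j <;> simp [sl2diag]
  map_mul' s t := by
    apply Subtype.ext
    change !![((s * t : Fˣ) : F), 0; 0, (((s * t)⁻¹ : Fˣ) : F)] =
      !![(s : F), 0; 0, ((s⁻¹ : Fˣ) : F)] * !![(t : F), 0; 0, ((t⁻¹ : Fˣ) : F)]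
    rw [Matrix.mul_fin_two, _root_.mul_inv_rev]
    ext i j
    fin_cases i <;> fin_cases j <;> simp [mul_comm]

/-- The unipotent subgroup `U ≤ PSL₂(F)`: the image of the upper unitriangular
matrices. -/
def Upsl : Subgroup (PSL2 F) :=
  ((QuotientGroup.mk' (Subgroup.center (SL2 F))).comp (uniHom F)).range

/-- The diagonal torus `T ≤ PSL₂(F)`: the image of the diagonal matrices of `SL₂(F)`. -/
def Tpsl : Subgroup (PSL2 F) :=
  ((QuotientGroup.mk' (Subgroup.center (SL2 F))).comp (diagHom F)).range

/-- For a field `F` of characteristic ≠ 2 and a nontrivial element `u` of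
the unipotent subgroup `U ≤ PSL₂(F)` (the image of `[[1,x],[0,1]]` with `x ≠ 0`), the
centralizer of `u` in `PSL₂(F)` equals `U`. -/
theorem stmt10 (hchar : ringChar F ≠ 2) (x : F) (hx : x ≠ 0) :
    Subgroup.centralizer {QuotientGroup.mk' (Subgroup.center (SL2 F)) (sl2uni x)} =
      Upsl F := by
  have h2 : (2 : F) ≠ 0 := Ring.two_ne_zero hchar
  ext g
  rw [Subgroup.mem_centralizer_singleton_iff]
  constructor
  · intro hg
    induction g using QuotientGroup.induction_on with
    | H A =>
      have hq : (QuotientGroup.mk' (Subgroup.center (SL2 F))) (A * sl2uni x) =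
          (QuotientGroup.mk' (Subgroup.center (SL2 F))) (sl2uni x * A) := by
        simpa [_root_.map_mul] using hg
      rw [QuotientGroup.mk'_eq_mk'] at hq
      obtain ⟨z, hz, hAz⟩ := hq
      obtain ⟨r, hr, hrz⟩ := Matrix.SpecialLinearGroup.mem_center_iff.mp hz
      rw [Fintype.card_fin] at hr
      have hr' : r = 1 ∨ r = -1 := mul_self_eq_one_iff.mp (by rw [← sq]; exact hr)
      set a := A.1 0 0 with ha
      set b := A.1 0 1 with hb
      set c := A.1 1 0 with hc
      set d := A.1 1 1 with hd
      have key : (A.1 * (sl2uni x).1) * z.1 = (sl2uni x).1 * A.1 := by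
        have := congrArg (fun M : SL2 F => (M : Matrix (Fin 2) (Fin 2) F)) hAz
        simpa using this
      rw [← hrz] at key
      have e : ∀ i j, ((A.1 * (sl2uni x).1) * (Matrix.scalar (Fin 2)) r) i j
          = ((sl2uni x).1 * A.1) i j := fun i j => by rw [key]
      have e00 := e 0 0
      have e01 := e 0 1
      have e10 := e 1 0
      have e11 := e 1 1
      simp [sl2uni, mul_apply, Fin.sum_univ_two, Matrix.scalar_apply,
        Matrix.diagonal_apply, ← ha, ← hb, ← hc, ← hd] at e00 e01 e10 e11
      rcases hr' with hr1 | hr1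
      · -- A * u = u * A
        rw [hr1] at e00 e01 e10 e11
        simp only [mul_one] at e00 e01 e10 e11
        -- e00 : a = a + x * c, e01 : a*x+b = b + x*d, e10 : c = c, e11 : c*x+d = d
        have hc0 : c = 0 := by
          have : x * c = 0 := by linear_combination -e00
          rcases mul_eq_zero.mp this with h | h
          · exact absurd h hx
          · exact h
        have hda : d = a := by
          have : x * (a - d) = 0 := by linear_combination e01
          have h := (mul_eq_zero.mp this).resolve_left hx
          linear_combination -h
        have hdet : a * a = 1 := by
          have := A.2
          rw [Matrix.det_fin_two] at this
          rw [← ha, ← hb, ← hc, ← hd] at this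
          rw [hc0, hda] at this
          linear_combination this
        -- A = scalar a * sl2uni (a * b)
        refine ⟨Multiplicative.ofAdd (a * b), ?_⟩
        rw [MonoidHom.comp_apply]
        show (QuotientGroup.mk' (Subgroup.center (SL2 F)))
            ((uniHom F) (Multiplicative.ofAdd (a * b))) =
          (QuotientGroup.mk' (Subgroup.center (SL2 F))) A
        rw [QuotientGroup.mk'_eq_mk']
        have hadet : Matrix.det ((Matrix.scalar (Fin 2)) a) = 1 := by
          rw [Matrix.scalar_apply, Matrix.det_diagonal, Fin.prod_univ_two]
          exact hdet
        refine ⟨⟨(Matrix.scalar (Fin 2)) a, hadet⟩,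
          Matrix.SpecialLinearGroup.mem_center_iff.mpr ⟨a, by
            rw [Fintype.card_fin]; rw [sq]; exact hdet, rfl⟩, ?_⟩
        ext i j
        erw [Matrix.SpecialLinearGroup.coe_mul]
        fin_cases i <;> fin_cases j <;>
          simp [sl2uni, mul_apply, Fin.sum_univ_two, Matrix.scalar_apply,
            Matrix.diagonal_apply, (show ∀ y : Multiplicative F, ((uniHom F y : SL2 F) : Matrix (Fin 2) (Fin 2) F) =
              !![1, Multiplicative.toAdd y; 0, 1] from fun _ => rfl),
            Matrix.SpecialLinearGroup.coe_mul] <;>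
          first
            | linear_combination b * hdet + hb
            | linear_combination hc - hc0
            | linear_combination hd - hda
            | linear_combination ha
      · -- A * u = - u * A : impossible
        exfalso
        rw [hr1] at e00 e01 e10 e11
        simp only [mul_neg, mul_one] at e00 e01 e10 e11
        -- e10 : -c = c
        have hc0 : c = 0 := by
          have : 2 * c = 0 := by linear_combination -e10
          rcases mul_eq_zero.mp this with h | h
          · exact absurd h h2
          · exact h
        have ha0 : a = 0 := by
          have : 2 * a = 0 := by linear_combination -e00 - x * hc0
          rcases mul_eq_zero.mp this with h | h
          · exact absurd h h2
          · exact h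
        have hd0 : d = 0 := by
          have : 2 * d = 0 := by linear_combination -e11 - x * hc0
          rcases mul_eq_zero.mp this with h | h
          · exact absurd h h2
          · exact h
        have := A.2
        rw [Matrix.det_fin_two] at this
        rw [← ha, ← hb, ← hc, ← hd, ha0, hc0, hd0] at this
        simp at this
  · rintro ⟨y, rfl⟩
    rw [MonoidHom.comp_apply, ← _root_.map_mul, ← _root_.map_mul]
    congr 1
    ext i j
    rw [Matrix.SpecialLinearGroup.coe_mul, Matrix.SpecialLinearGroup.coe_mul]
    fin_cases i <;> fin_cases j <;>
      simp [sl2uni, mul_apply, Fin.sum_univ_two, (show ∀ y : Multiplicative F, ((uniHom F y : SL2 F) : Matrix (Fin 2) (Fin 2) F) =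
              !![1, Multiplicative.toAdd y; 0, 1] from fun _ => rfl),
        Matrix.SpecialLinearGroup.coe_mul] <;> ring
end

section
/- Let F be a field of characteristic ≠ 2 and 𝕋 the diagonal torus of PGL₂(F). For every g ∈ PGL₂(F) not in the normalizer of 𝕋, the intersection 𝕋 ∩ 𝕋^g is trivial. -/
open Matrix

variable (F : Type*) [Field F]

/-- `PGL₂(F) = GL₂(F)` modulo its center (the scalar matrices). -/
abbrev PGL2 := GL (Fin 2) F ⧸ Subgroup.center (GL (Fin 2) F)

/-- `PSL₂(F)` viewed as a subgroup of `PGL₂(F)`: the image of `SL₂(F)` under the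
natural quotient map `GL₂(F) → PGL₂(F)`. -/
def PSLinPGL : Subgroup (PGL2 F) :=
  ((QuotientGroup.mk' (Subgroup.center (GL (Fin 2) F))).comp
    (Matrix.SpecialLinearGroup.toGL :
      Matrix.SpecialLinearGroup (Fin 2) F →* GL (Fin 2) F)).range

variable {F} in
/-- The diagonal matrix `diag(a, b)` as an element of `GL₂(F)`. -/
noncomputable def glDiag (a b : Fˣ) : GL (Fin 2) F :=
  Matrix.GeneralLinearGroup.mkOfDetNeZero !![(a : F), 0; 0, (b : F)]
    (by simp [Matrix.det_fin_two_of])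

/-- The homomorphism `F^× × F^× → GL₂(F)` given by diagonal matrices. -/
noncomputable def glDiagHom : Fˣ × Fˣ →* GL (Fin 2) F where
  toFun p := glDiag p.1 p.2
  map_one' := by
    ext i j
    show (!![((1:Fˣ) : F), 0; 0, ((1:Fˣ) : F)] : Matrix _ _ F) i j = _
    fin_cases i <;> fin_cases j <;> simp
  map_mul' p q := by
    ext i j
    show (!![((p.1*q.1 : Fˣ) : F), 0; 0, ((p.2*q.2 : Fˣ) : F)] : Matrix _ _ F) i j = _
    rw [show ((glDiag p.1 p.2 * glDiag q.1 q.2 : GL (Fin 2) F) : Matrix (Fin 2) (Fin 2) F)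
        = !![((p.1 : F)), 0; 0, ((p.2 : F))] * !![((q.1 : F)), 0; 0, ((q.2 : F))] from rfl,
      Matrix.mul_fin_two]
    fin_cases i <;> fin_cases j <;> simp

/-- The diagonal torus `𝕋 ≤ PGL₂(F)`: the image of the invertible diagonal matrices. -/
noncomputable def Tpgl : Subgroup (PGL2 F) :=
  ((QuotientGroup.mk' (Subgroup.center (GL (Fin 2) F))).comp (glDiagHom F)).range

section Aux
variable {F}

/-- The antidiagonal matrix with entries `p, q` as an element of `GL₂(F)`. -/
noncomputable def glAnti (p q : Fˣ) : GL (Fin 2) F :=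
  Matrix.GeneralLinearGroup.mkOfDetNeZero !![0, (p : F); (q : F), 0]
    (by simp [Matrix.det_fin_two_of])

lemma mem_Tpgl_iff {x : PGL2 F} :
    x ∈ Tpgl F ↔ ∃ a b : Fˣ, (QuotientGroup.mk (glDiag a b) : PGL2 F) = x := by
  constructor
  · rintro ⟨⟨a, b⟩, rfl⟩; exact ⟨a, b, rfl⟩
  · rintro ⟨a, b, rfl⟩; exact ⟨(a, b), rfl⟩

lemma center_is_scalar {A : GL (Fin 2) F} (h : A ∈ Subgroup.center (GL (Fin 2) F)) :
    ∃ r : F, (A : Matrix (Fin 2) (Fin 2) F) = r • 1 := by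
  have hc := Subgroup.mem_center_iff.mp h
  set M : Matrix (Fin 2) (Fin 2) F := (A : Matrix (Fin 2) (Fin 2) F) with hM
  have hU : (Matrix.GeneralLinearGroup.mkOfDetNeZero !![(1:F),1;0,1]
        (by simp [Matrix.det_fin_two_of]) : GL (Fin 2) F) * A
      = A * (Matrix.GeneralLinearGroup.mkOfDetNeZero !![(1:F),1;0,1]
        (by simp [Matrix.det_fin_two_of])) := hc _
  have hV : (Matrix.GeneralLinearGroup.mkOfDetNeZero !![(1:F),0;1,1]
        (by simp [Matrix.det_fin_two_of]) : GL (Fin 2) F) * A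
      = A * (Matrix.GeneralLinearGroup.mkOfDetNeZero !![(1:F),0;1,1]
        (by simp [Matrix.det_fin_two_of])) := hc _
  have hU' : !![(1:F),1;0,1] * M = M * !![(1:F),1;0,1] := congrArg Units.val hU
  have hV' : !![(1:F),0;1,1] * M = M * !![(1:F),0;1,1] := congrArg Units.val hV
  rw [Matrix.eta_fin_two M, Matrix.mul_fin_two, Matrix.mul_fin_two] at hU' hV'
  have e1 := congrFun (congrFun hU' 0) 0
  have e2 := congrFun (congrFun hU' 0) 1
  have e3 := congrFun (congrFun hV' 0) 0
  simp at e1 e2 e3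
  refine ⟨M 0 0, ?_⟩
  rw [Matrix.eta_fin_two M, e1, e3, show M 1 1 = M 0 0 by linear_combination e2]
  ext i j; fin_cases i <;> fin_cases j <;> simp [Matrix.one_apply]

lemma glDiag_mem_center (a : Fˣ) : glDiag a a ∈ Subgroup.center (GL (Fin 2) F) := by
  refine Subgroup.mem_center_iff.mpr fun g => ?_
  apply Units.ext
  show (g : Matrix (Fin 2) (Fin 2) F) * !![(a:F),0;0,(a:F)]
      = !![(a:F),0;0,(a:F)] * (g : Matrix (Fin 2) (Fin 2) F)
  have h : !![(a:F),0;0,(a:F)] = (a:F) • (1 : Matrix (Fin 2) (Fin 2) F) := by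
    ext i j; fin_cases i <;> fin_cases j <;> simp [Matrix.one_apply]
  rw [h, Matrix.mul_smul, Matrix.smul_mul, Matrix.mul_one, Matrix.one_mul]

lemma anti_mul_diag (p q a b : Fˣ) :
    glAnti p q * glDiag a b = glDiag b a * glAnti p q := by
  apply Units.ext
  show (!![0,(p:F);(q:F),0] : Matrix (Fin 2) (Fin 2) F) * !![(a:F),0;0,(b:F)]
      = !![(b:F),0;0,(a:F)] * !![0,(p:F);(q:F),0]
  rw [Matrix.mul_fin_two, Matrix.mul_fin_two]
  ext i j; fin_cases i <;> fin_cases j <;> simp <;> ring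

lemma mk_glAnti_mem_normalizer (p q : Fˣ) :
    (QuotientGroup.mk (glAnti p q) : PGL2 F) ∈ Subgroup.normalizer (Tpgl F : Set (PGL2 F)) := by
  rw [Subgroup.mem_normalizer_iff]
  intro h
  constructor
  · intro hh
    obtain ⟨a, b, rfl⟩ := mem_Tpgl_iff.mp hh
    rw [mem_Tpgl_iff]
    refine ⟨b, a, ?_⟩
    rw [show ((QuotientGroup.mk (glAnti p q) : PGL2 F) * QuotientGroup.mk (glDiag a b)
        * (QuotientGroup.mk (glAnti p q))⁻¹ : PGL2 F)
        = QuotientGroup.mk (glAnti p q * glDiag a b * (glAnti p q)⁻¹) by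
          rw [← QuotientGroup.mk_inv, ← QuotientGroup.mk_mul, ← QuotientGroup.mk_mul]]
    congr 1
    rw [anti_mul_diag]
    exact (mul_inv_cancel_right (glDiag b a) (glAnti p q)).symm
  · intro hh
    obtain ⟨a, b, heq⟩ := mem_Tpgl_iff.mp hh
    have hh2 : h = (QuotientGroup.mk (glAnti p q) : PGL2 F)⁻¹
        * QuotientGroup.mk (glDiag a b) * QuotientGroup.mk (glAnti p q) := by
      rw [heq]; group
    rw [mem_Tpgl_iff]
    refine ⟨b, a, ?_⟩
    rw [hh2, show ((QuotientGroup.mk (glAnti p q) : PGL2 F)⁻¹ * QuotientGroup.mk (glDiag a b)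
        * QuotientGroup.mk (glAnti p q) : PGL2 F)
        = QuotientGroup.mk ((glAnti p q)⁻¹ * glDiag a b * glAnti p q) by
          rw [← QuotientGroup.mk_inv, ← QuotientGroup.mk_mul, ← QuotientGroup.mk_mul]]
    congr 1
    rw [mul_assoc, ← anti_mul_diag p q b a, inv_mul_cancel_left]

end Aux

/-- Let `F` be a field of characteristic ≠ 2 with more than 3 elements
and `𝕋` the diagonal torus of `PGL₂(F)`. For every `g ∈ PGL₂(F)` not in the normalizer
of `𝕋`, the intersection `𝕋 ∩ 𝕋^g` is trivial. -/
theorem stmt13 (hchar : ringChar F ≠ 2) (hcard : 3 < Nat.card F ∨ Infinite F) :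
    ∀ g : PGL2 F, g ∉ Subgroup.normalizer (Tpgl F : Set (PGL2 F)) →
      Tpgl F ⊓ Subgroup.map (MulAut.conj g).toMonoidHom (Tpgl F) = ⊥ := by
  intro g hg
  rw [Subgroup.eq_bot_iff_forall]
  rintro x ⟨hx1, hx2⟩
  by_contra hx
  obtain ⟨a, b, hab⟩ := mem_Tpgl_iff.mp hx1
  obtain ⟨y, hy, hxy⟩ := hx2
  obtain ⟨c, d, hcd⟩ := mem_Tpgl_iff.mp hy
  obtain ⟨G, rfl⟩ := QuotientGroup.mk_surjective g
  have hab' : (a : F) ≠ (b : F) := by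
    intro hEq
    apply hx
    rw [← hab]
    have hEq' : a = b := Units.ext hEq
    rw [← hEq']
    exact (QuotientGroup.eq_one_iff _).mpr (glDiag_mem_center a)
  have hcd' : (c : F) ≠ (d : F) := by
    intro hEq
    apply hx
    have hEq' : c = d := Units.ext hEq
    have h1 : y = 1 := by
      rw [← hcd, ← hEq']
      exact (QuotientGroup.eq_one_iff _).mpr (glDiag_mem_center c)
    rw [← hxy, h1]
    simp
  -- the key equation in the quotient
  have hmk : (QuotientGroup.mk (G * glDiag c d * G⁻¹) : PGL2 F)
      = QuotientGroup.mk (glDiag a b) := by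
    rw [hab, ← hxy, ← hcd]
    show _ = (MulAut.conj (QuotientGroup.mk G)) (QuotientGroup.mk (glDiag c d))
    rw [MulAut.conj_apply]
    rw [← QuotientGroup.mk_inv, ← QuotientGroup.mk_mul, ← QuotientGroup.mk_mul]
  set Z : GL (Fin 2) F := (G * glDiag c d * G⁻¹)⁻¹ * glDiag a b with hZdef
  have hZc : Z ∈ Subgroup.center (GL (Fin 2) F) := QuotientGroup.eq.mp hmk
  obtain ⟨r, hr⟩ := center_is_scalar hZc
  have hcZ := Subgroup.mem_center_iff.mp hZc
  have hGL : glDiag a b * G = G * (glDiag c d * Z) := by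
    have h2 : G * glDiag c d * G⁻¹ * Z = glDiag a b := by
      rw [hZdef]; exact mul_inv_cancel_left _ _
    calc glDiag a b * G = G * glDiag c d * G⁻¹ * Z * G := by rw [h2]
    _ = G * glDiag c d * G⁻¹ * (G * Z) := by
        rw [mul_assoc (G * glDiag c d * G⁻¹) Z G, ← hcZ G]
    _ = G * (glDiag c d * Z) := by group
  set M : Matrix (Fin 2) (Fin 2) F := (G : Matrix (Fin 2) (Fin 2) F) with hMdef
  have hM : (!![(a:F),0;0,(b:F)] : Matrix (Fin 2) (Fin 2) F) * M
      = r • (M * !![(c:F),0;0,(d:F)]) := by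
    have h3 := congrArg Units.val hGL
    rw [Units.val_mul, Units.val_mul, Units.val_mul, hr] at h3
    rw [show ((glDiag a b : GL (Fin 2) F) : Matrix (Fin 2) (Fin 2) F)
        = !![(a:F),0;0,(b:F)] from rfl,
      show ((glDiag c d : GL (Fin 2) F) : Matrix (Fin 2) (Fin 2) F)
        = !![(c:F),0;0,(d:F)] from rfl] at h3
    rw [h3, Matrix.mul_smul, Matrix.mul_one, Matrix.mul_smul]
  -- entrywise equations
  have E : ∀ i j, (!![(a:F),0;0,(b:F)] * M) i j
      = r * (M * !![(c:F),0;0,(d:F)]) i j := fun i j => by rw [hM]; simp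
  have e00 : (a:F) * M 0 0 = r * (M 0 0 * (c:F)) := by
    have := E 0 0; simpa [Matrix.mul_apply, Fin.sum_univ_two] using this
  have e01 : (a:F) * M 0 1 = r * (M 0 1 * (d:F)) := by
    have := E 0 1; simpa [Matrix.mul_apply, Fin.sum_univ_two] using this
  have e10 : (b:F) * M 1 0 = r * (M 1 0 * (c:F)) := by
    have := E 1 0; simpa [Matrix.mul_apply, Fin.sum_univ_two] using this
  have e11 : (b:F) * M 1 1 = r * (M 1 1 * (d:F)) := by
    have := E 1 1; simpa [Matrix.mul_apply, Fin.sum_univ_two] using this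
  have hdet : M 0 0 * M 1 1 - M 0 1 * M 1 0 ≠ 0 := by
    have hu : IsUnit M.det := (Matrix.isUnit_iff_isUnit_det M).mp ⟨G, rfl⟩
    rw [Matrix.det_fin_two] at hu
    exact hu.ne_zero
  have hrne : r ≠ 0 := by
    have hu : IsUnit ((r • 1 : Matrix (Fin 2) (Fin 2) F).det) := by
      rw [← hr]; exact (Matrix.isUnit_iff_isUnit_det _).mp ⟨Z, rfl⟩
    rw [Matrix.det_smul, Matrix.det_one, mul_one] at hu
    intro h0
    rw [h0] at hu
    simp [pow_succ] at hu
  apply hg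
  by_cases h00 : M 0 0 = 0
  · -- antidiagonal case
    have h01 : M 0 1 ≠ 0 := fun h => hdet (by rw [h00, h]; ring)
    have h10 : M 1 0 ≠ 0 := fun h => hdet (by rw [h00, h]; ring)
    have had : (a:F) = r * (d:F) := by
      apply mul_right_cancel₀ h01
      linear_combination e01
    have hbc : (b:F) = r * (c:F) := by
      apply mul_right_cancel₀ h10
      linear_combination e10
    have h11 : M 1 1 = 0 := by
      have hz : M 1 1 * ((b:F) - r * (d:F)) = 0 := by linear_combination e11
      have hne : (b:F) - r * (d:F) ≠ 0 := by
        rw [← had]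
        exact sub_ne_zero.mpr (Ne.symm hab')
      exact (mul_eq_zero.mp hz).resolve_right hne
    have hGeq : G = glAnti (Units.mk0 (M 0 1) h01) (Units.mk0 (M 1 0) h10) := by
      apply Units.ext
      show M = !![0, M 0 1; M 1 0, 0]
      conv_lhs => rw [Matrix.eta_fin_two M]
      rw [h00, h11]
    rw [hGeq]
    exact mk_glAnti_mem_normalizer _ _
  · -- diagonal case
    have hac : (a:F) = r * (c:F) := by
      apply mul_right_cancel₀ h00
      linear_combination e00
    have hrd : r * (d:F) ≠ (a:F) := by
      intro h
      apply hcd'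
      apply mul_left_cancel₀ hrne
      rw [h, hac]
    have h01 : M 0 1 = 0 := by
      have hz : M 0 1 * ((a:F) - r * (d:F)) = 0 := by linear_combination e01
      have hne : (a:F) - r * (d:F) ≠ 0 := sub_ne_zero.mpr (Ne.symm hrd)
      exact (mul_eq_zero.mp hz).resolve_right hne
    have h10 : M 1 0 = 0 := by
      have hz : M 1 0 * ((b:F) - r * (c:F)) = 0 := by linear_combination e10
      have hne : (b:F) - r * (c:F) ≠ 0 := by
        rw [← hac]
        exact sub_ne_zero.mpr (Ne.symm hab')
      exact (mul_eq_zero.mp hz).resolve_right hne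
    have h11 : M 1 1 ≠ 0 := fun h => hdet (by rw [h, h10]; ring)
    have hGeq : G = glDiag (Units.mk0 (M 0 0) h00) (Units.mk0 (M 1 1) h11) := by
      apply Units.ext
      show M = !![M 0 0, 0; 0, M 1 1]
      conv_lhs => rw [Matrix.eta_fin_two M]
      rw [h01, h10]
    rw [hGeq]
    exact Subgroup.le_normalizer (mem_Tpgl_iff.mpr ⟨_, _, rfl⟩)
end
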